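/- Let (T_t)_{t≥0} be a positive contraction semigroup on real Lᵖ(X, dx), 1 ≤ p < ∞. Suppose f ≥ 0 satisfies T_t f = f for all t > 0 and has support S. If E ⊆ X is an invariant Borel set for the semigroup (i.e. supp(g) ⊆ E implies supp(T_t g) ⊆ E for all t ≥ 0 and g ∈ Lᵖ), then S \ E is also an invariant set. -/

import Mathlib

open MeasureTheory Filter Topology

/-- `A` is an invariant set for the family `T` on real `Lᵖ`: every function
supported (a.e.) in `A` has all its images `T t g`, `t ≥ 0`, supported in `A`. -/
def IsInvariantSet {X : Type*} [MeasurableSpace X] {μ : Measure X} {p : ENNReal}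
    [Fact (1 ≤ p)] (T : ℝ → Lp ℝ p μ →L[ℝ] Lp ℝ p μ) (A : Set X) : Prop :=
  ∀ g : Lp ℝ p μ, (∀ᵐ x ∂μ, x ∉ A → g x = 0) →
    ∀ t : ℝ, 0 ≤ t → ∀ᵐ x ∂μ, x ∉ A → (T t g) x = 0

/-- The a.e. support of a nonnegative fixed point of a positive semigroup
is an invariant set. -/
lemma fixed_support_invariant
    {X : Type*} [MeasurableSpace X] {μ : Measure X}
    {p : ENNReal} [Fact (1 ≤ p)] (hp : p ≠ ⊤)
    (T : ℝ → Lp ℝ p μ →L[ℝ] Lp ℝ p μ)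
    (hpos : ∀ t : ℝ, 0 ≤ t → ∀ g : Lp ℝ p μ, 0 ≤ g → 0 ≤ T t g)
    (φ : Lp ℝ p μ) (hφ0 : 0 ≤ φ) (hfixφ : ∀ t : ℝ, 0 ≤ t → T t φ = φ)
    (A : Set X) (hA : ∀ᵐ x ∂μ, x ∈ A ↔ φ x ≠ 0) :
    IsInvariantSet T A := by
  have hp0 : p ≠ 0 := (zero_lt_one.trans_le Fact.out).ne'
  set q : ℝ := p.toReal with hqdef
  have hq0 : 0 < q := ENNReal.toReal_pos hp0 hp
  have hmono : ∀ t : ℝ, 0 ≤ t → ∀ a b : Lp ℝ p μ, a ≤ b → T t a ≤ T t b := by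
    intro t ht a b hab
    have h := hpos t ht (b - a) (sub_nonneg.mpr hab)
    rw [map_sub] at h
    exact sub_nonneg.mp h
  intro g hg t ht
  set u : Lp ℝ p μ := |g| with hu
  have hu0 : 0 ≤ u := abs_nonneg g
  have hu_supp : ∀ᵐ x ∂μ, x ∉ A → u x = 0 := by
    filter_upwards [hg, Lp.coeFn_abs g] with x hx habs hxA
    rw [habs, hx hxA, abs_zero]
  -- the truncated sequence
  set useq : ℕ → Lp ℝ p μ := fun n => u ⊓ ((n : ℝ) • φ) with huseq
  have huseq0 : ∀ n : ℕ, 0 ≤ useq n := fun n =>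
    le_inf hu0 (by rw [Nat.cast_smul_eq_nsmul]; exact nsmul_nonneg hφ0 n)
  -- each `T t (useq n)` vanishes a.e. off `A`
  have hvanish : ∀ n : ℕ, ∀ᵐ x ∂μ, x ∉ A → (T t (useq n)) x = 0 := by
    intro n
    have h0 : (0 : Lp ℝ p μ) ≤ T t (useq n) := hpos t ht _ (huseq0 n)
    have h1 : T t (useq n) ≤ (n : ℝ) • φ := by
      have h := hmono t ht _ _ (inf_le_right : useq n ≤ (n : ℝ) • φ)
      rwa [(T t).map_smul, hfixφ t ht] at h
    rw [← Lp.coeFn_nonneg] at h0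
    rw [← Lp.coeFn_le] at h1
    filter_upwards [h0, h1, Lp.coeFn_smul (n : ℝ) φ, hA] with x hx0 hx1 hxs hxA hxA'
    have hφx : φ x = 0 := by
      by_contra hc
      exact hxA' (hxA.mpr hc)
    have hx0' : (0 : ℝ) ≤ (T t (useq n)) x := hx0
    have hx1' : (T t (useq n)) x ≤ (n : ℝ) * φ x := by
      have := hx1
      rw [hxs] at this
      simpa using this
    rw [hφx] at hx1'
    linarith
  -- coercion description of `useq`
  have hcoe : ∀ᵐ x ∂μ, ∀ n : ℕ, (useq n) x = min (u x) ((n : ℝ) * φ x) := by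
    rw [ae_all_iff]
    intro n
    filter_upwards [Lp.coeFn_inf u ((n : ℝ) • φ), Lp.coeFn_smul (n : ℝ) φ] with x h1 h2
    rw [h1]
    simp only [Pi.inf_apply, h2, Pi.smul_apply, smul_eq_mul]
  have hφae : ∀ᵐ x ∂μ, 0 ≤ φ x := (Lp.coeFn_nonneg φ).mpr hφ0
  have huae : ∀ᵐ x ∂μ, 0 ≤ u x := (Lp.coeFn_nonneg u).mpr hu0
  -- a.e. eventually `useq n x = u x`
  have hptwise : ∀ᵐ x ∂μ, ∀ᶠ n : ℕ in atTop, (useq n) x = u x := by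
    filter_upwards [hcoe, hφae, huae, hu_supp, hA] with x hc hφx hux hsupp hiff
    by_cases hxA : x ∈ A
    · have hφpos : 0 < φ x := lt_of_le_of_ne hφx (Ne.symm (hiff.mp hxA))
      obtain ⟨N, hN⟩ := exists_nat_ge (u x / φ x)
      refine eventually_atTop.mpr ⟨N, fun n hn => ?_⟩
      have : u x ≤ (n : ℝ) * φ x := by
        have h1 : u x / φ x ≤ (n : ℝ) := hN.trans (Nat.cast_le.mpr hn)
        calc u x = (u x / φ x) * φ x := by field_simp
        _ ≤ (n : ℝ) * φ x := by exact mul_le_mul_of_nonneg_right h1 hφx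
      rw [hc n, min_eq_left this]
    · have hux0 : u x = 0 := hsupp hxA
      have hφx0 : φ x = 0 := by
        by_contra hcon
        exact hxA (hiff.mpr hcon)
      refine Eventually.of_forall fun n => ?_
      rw [hc n, hux0, hφx0, mul_zero, min_self]
  -- convergence of the lintegrals (dominated convergence)
  have hL : Tendsto (fun n => ∫⁻ x, (‖(useq n) x - u x‖₊ : ENNReal) ^ q ∂μ) atTop (𝓝 0) := by
    have hfin : ∫⁻ x, (‖u x‖₊ : ENNReal) ^ q ∂μ ≠ ⊤ := by
      have h1 := Lp.eLpNorm_ne_top u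
      rw [eLpNorm_eq_lintegral_rpow_enorm_toReal hp0 hp] at h1
      simp only [enorm_eq_nnnorm] at h1
      intro hcon
      rw [hcon] at h1
      have htop : (⊤ : ENNReal) ^ (1 / q) = ⊤ :=
        ENNReal.top_rpow_of_pos (by positivity)
      rw [htop] at h1
      exact h1 rfl
    have h0 : (0 : ENNReal) = ∫⁻ (_ : X), (0 : ENNReal) ∂μ := by simp
    rw [h0]
    refine tendsto_lintegral_of_dominated_convergence' (fun x => (‖u x‖₊ : ENNReal) ^ q)
      (fun n => ?_) (fun n => ?_) hfin ?_
    · exact (((Lp.aestronglyMeasurable (useq n)).sub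
        (Lp.aestronglyMeasurable u)).enorm).pow_const q
    · filter_upwards [hcoe, hφae, huae] with x hc hφx hux
      have h1 : |(useq n) x - u x| ≤ |u x| := by
        rw [hc n]
        rw [abs_of_nonneg hux]
        rw [abs_of_nonpos (by simp [min_le_left])]
        simp only [neg_sub]
        have : 0 ≤ min (u x) ((n : ℝ) * φ x) :=
          le_min hux (mul_nonneg (Nat.cast_nonneg n) hφx)
        linarith [min_le_left (u x) ((n : ℝ) * φ x)]
      have h2 : ‖(useq n) x - u x‖₊ ≤ ‖u x‖₊ := by
        rw [← NNReal.coe_le_coe]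
        simpa [coe_nnnorm, Real.norm_eq_abs] using h1
      exact ENNReal.rpow_le_rpow (ENNReal.coe_le_coe.mpr h2) hq0.le
    · filter_upwards [hptwise] with x hx
      refine Tendsto.congr' ?_ tendsto_const_nhds
      filter_upwards [hx] with n hn
      rw [hn]
      simp [ENNReal.zero_rpow_of_pos hq0]
  -- convergence in Lp
  have hLp : Tendsto useq atTop (𝓝 u) := by
    rw [Lp.tendsto_Lp_iff_tendsto_eLpNorm']
    have heq : ∀ n, eLpNorm (⇑(useq n) - ⇑u) p μ
        = (∫⁻ x, (‖(useq n) x - u x‖₊ : ENNReal) ^ q ∂μ) ^ (1 / q) := by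
      intro n
      rw [eLpNorm_eq_lintegral_rpow_enorm_toReal hp0 hp]
      rfl
    simp_rw [heq]
    have := ((ENNReal.continuous_rpow_const (y := 1 / q)).tendsto 0).comp hL
    have h0 : ((0 : ENNReal) ^ (1 / q)) = 0 := ENNReal.zero_rpow_of_pos (by positivity)
    rw [← h0]
    exact this
  have hTcont : Tendsto (fun n => T t (useq n)) atTop (𝓝 (T t u)) :=
    ((T t).continuous.tendsto u).comp hLp
  obtain ⟨ns, _, hae⟩ := (tendstoInMeasure_of_tendsto_Lp hTcont).exists_seq_tendsto_ae
  have hvanish' : ∀ᵐ x ∂μ, ∀ n : ℕ, x ∉ A → (T t (useq n)) x = 0 := ae_all_iff.mpr hvanish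
  have hTu0 : ∀ᵐ x ∂μ, x ∉ A → (T t u) x = 0 := by
    filter_upwards [hvanish', hae] with x h1 h2 hxA
    have h3 : Tendsto (fun _ : ℕ => (0 : ℝ)) atTop (𝓝 ((T t u) x)) :=
      h2.congr fun k => (h1 _ hxA)
    exact (tendsto_nhds_unique tendsto_const_nhds h3).symm
  -- transfer from `u = |g|` to `g`
  have hgu : |T t g| ≤ T t u := by
    have h1 : T t g ≤ T t u := hmono t ht _ _ (le_abs_self g)
    have h2 : -(T t g) ≤ T t u := by
      have h := hmono t ht (-g) u (neg_le_abs g)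
      rwa [map_neg] at h
    exact abs_le'.mpr ⟨h1, h2⟩
  rw [← Lp.coeFn_le] at hgu
  filter_upwards [hgu, Lp.coeFn_abs (T t g), hTu0] with x hx1 hx2 hx3 hxA
  have : |(T t g) x| ≤ (T t u) x := by rw [← hx2]; exact hx1
  rw [hx3 hxA] at this
  exact abs_eq_zero.mp (le_antisymm this (abs_nonneg _))

/-- Theorem 13: if `T_t f = f` with `f ≥ 0` of support `S`, and `E` is an
invariant Borel set for the positive contraction semigroup `(T_t)`, then
`S \ E` is also invariant. -/
theorem support_diff_invariant
    {X : Type*} [MeasurableSpace X] (μ : Measure X) [SigmaFinite μ]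
    (p : ENNReal) [Fact (1 ≤ p)] (hp : p ≠ ⊤)
    (T : ℝ → Lp ℝ p μ →L[ℝ] Lp ℝ p μ)
    (hT0 : T 0 = 1)
    (hsem : ∀ s t : ℝ, 0 ≤ s → 0 ≤ t → T (s + t) = (T s).comp (T t))
    (hcontr : ∀ t : ℝ, 0 ≤ t → ∀ g, ‖T t g‖ ≤ ‖g‖)
    (hpos : ∀ t : ℝ, 0 ≤ t → ∀ g : Lp ℝ p μ, 0 ≤ g → 0 ≤ T t g)
    (f : Lp ℝ p μ) (hf0 : 0 ≤ f) (hfix : ∀ t : ℝ, 0 < t → T t f = f)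
    (E : Set X) (hE : MeasurableSet E) (hEinv : IsInvariantSet T E) :
    IsInvariantSet T ({x | f x ≠ 0} \ E) := by
  have hp0 : p ≠ 0 := (zero_lt_one.trans_le Fact.out).ne'
  set q : ℝ := p.toReal with hqdef
  have hq0 : 0 < q := ENNReal.toReal_pos hp0 hp
  -- the truncation of `f` to `E`, as an element of `Lp`
  set fE : Lp ℝ p μ := MemLp.toLp (E.indicator ⇑f) ((Lp.memLp f).indicator hE) with hfE
  have hfEcoe : ⇑fE =ᵐ[μ] E.indicator ⇑f := MemLp.coeFn_toLp _
  set f' : Lp ℝ p μ := f - fE with hf'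
  have hf'coe : ∀ᵐ x ∂μ, f' x = f x - E.indicator (⇑f) x := by
    filter_upwards [Lp.coeFn_sub f fE, hfEcoe] with x h1 h2
    rw [hf', h1, Pi.sub_apply, h2]
  have hf'E : ∀ᵐ x ∂μ, x ∈ E → f' x = 0 := by
    filter_upwards [hf'coe] with x h1 hxE
    rw [h1, Set.indicator_of_mem hxE, sub_self]
  have hf'Ec : ∀ᵐ x ∂μ, x ∉ E → f' x = f x := by
    filter_upwards [hf'coe] with x h1 hxE
    rw [h1, Set.indicator_of_notMem hxE, sub_zero]
  have hfae : ∀ᵐ x ∂μ, 0 ≤ f x := (Lp.coeFn_nonneg f).mpr hf0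
  have hf'0 : 0 ≤ f' := by
    rw [← Lp.coeFn_nonneg]
    filter_upwards [hf'E, hf'Ec, hfae] with x h1 h2 h3
    simp only [Pi.zero_apply]
    by_cases hxE : x ∈ E
    · rw [h1 hxE]
    · rw [h2 hxE]; exact h3
  have hfE_supp : ∀ᵐ x ∂μ, x ∉ E → fE x = 0 := by
    filter_upwards [hfEcoe] with x h1 hxE
    rw [h1, Set.indicator_of_notMem hxE]
  -- `f'` is a fixed point
  have hfix' : ∀ t : ℝ, 0 ≤ t → T t f' = f' := by
    intro t ht
    rcases eq_or_lt_of_le ht with rfl | htpos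
    · rw [hT0]; simp
    set h : Lp ℝ p μ := T t f' with hh
    have hsum : f = T t fE + h := by
      have h2 : T t (fE + f') = T t fE + h := map_add _ _ _
      have h3 : fE + f' = f := by rw [hf']; abel
      rw [h3] at h2
      rw [← h2, hfix t htpos]
    have hTfE0 : ∀ᵐ x ∂μ, x ∉ E → (T t fE) x = 0 := hEinv fE hfE_supp t ht
    have hEc : ∀ᵐ x ∂μ, x ∉ E → h x = f' x := by
      have hsc : ⇑f =ᵐ[μ] ⇑(T t fE) + ⇑h := by
        rw [hsum]; exact Lp.coeFn_add _ _
      filter_upwards [hsc, hTfE0, hf'Ec] with x h1 h2 h3 hxE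
      have := h1
      rw [Pi.add_apply, h2 hxE, zero_add] at this
      rw [← this, h3 hxE]
    have hpos_h : 0 ≤ h := hpos t ht f' hf'0
    -- norm comparison via lintegrals
    have hJ : ∀ v : Lp ℝ p μ, ∫⁻ x, (‖v x‖₊ : ENNReal) ^ q ∂μ = (eLpNorm (⇑v) p μ) ^ q := by
      intro v
      rw [eLpNorm_eq_lintegral_rpow_enorm_toReal hp0 hp, ← ENNReal.rpow_mul, one_div,
        inv_mul_cancel₀ hq0.ne', ENNReal.rpow_one]
      rfl
    have hnorm : eLpNorm (⇑h) p μ ≤ eLpNorm (⇑f') p μ := by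
      have h1 := hcontr t ht f'
      rw [Lp.norm_def, Lp.norm_def] at h1
      exact (ENNReal.toReal_le_toReal (Lp.eLpNorm_ne_top _) (Lp.eLpNorm_ne_top _)).mp h1
    have hJle : ∫⁻ x, (‖h x‖₊ : ENNReal) ^ q ∂μ ≤ ∫⁻ x, (‖f' x‖₊ : ENNReal) ^ q ∂μ := by
      rw [hJ, hJ]
      exact ENNReal.rpow_le_rpow hnorm hq0.le
    have hJf'fin : ∫⁻ x, (‖f' x‖₊ : ENNReal) ^ q ∂μ ≠ ⊤ := by
      rw [hJ]
      exact ENNReal.rpow_ne_top_of_nonneg hq0.le (Lp.eLpNorm_ne_top f')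
    -- split over `E` and `Eᶜ`
    have hsplit_h : (∫⁻ x in E, (‖h x‖₊ : ENNReal) ^ q ∂μ)
        + ∫⁻ x in Eᶜ, (‖h x‖₊ : ENNReal) ^ q ∂μ = ∫⁻ x, (‖h x‖₊ : ENNReal) ^ q ∂μ :=
      lintegral_add_compl _ hE
    have hsplit_f' : (∫⁻ x in E, (‖f' x‖₊ : ENNReal) ^ q ∂μ)
        + ∫⁻ x in Eᶜ, (‖f' x‖₊ : ENNReal) ^ q ∂μ = ∫⁻ x, (‖f' x‖₊ : ENNReal) ^ q ∂μ :=
      lintegral_add_compl _ hE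
    have hEzero : ∫⁻ x in E, (‖f' x‖₊ : ENNReal) ^ q ∂μ = 0 := by
      have : (fun x => (‖f' x‖₊ : ENNReal) ^ q) =ᵐ[μ.restrict E] 0 := by
        rw [EventuallyEq, ae_restrict_iff' hE]
        filter_upwards [hf'E] with x h1 hxE
        rw [h1 hxE]
        simp [ENNReal.zero_rpow_of_pos hq0]
      rw [lintegral_congr_ae this]
      simp
    have hEc_eq : ∫⁻ x in Eᶜ, (‖h x‖₊ : ENNReal) ^ q ∂μ
        = ∫⁻ x in Eᶜ, (‖f' x‖₊ : ENNReal) ^ q ∂μ := by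
      refine lintegral_congr_ae ?_
      rw [EventuallyEq, ae_restrict_iff' hE.compl]
      filter_upwards [hEc] with x h1 hxE
      rw [h1 hxE]
    have hCfin : ∫⁻ x in Eᶜ, (‖f' x‖₊ : ENNReal) ^ q ∂μ ≠ ⊤ := by
      intro hcon
      apply hJf'fin
      rw [← hsplit_f', hcon]
      simp
    have hEh0 : ∫⁻ x in E, (‖h x‖₊ : ENNReal) ^ q ∂μ = 0 := by
      have hkey : (∫⁻ x in E, (‖h x‖₊ : ENNReal) ^ q ∂μ)
          + ∫⁻ x in Eᶜ, (‖f' x‖₊ : ENNReal) ^ q ∂μ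
          ≤ 0 + ∫⁻ x in Eᶜ, (‖f' x‖₊ : ENNReal) ^ q ∂μ := by
        calc (∫⁻ x in E, (‖h x‖₊ : ENNReal) ^ q ∂μ)
            + ∫⁻ x in Eᶜ, (‖f' x‖₊ : ENNReal) ^ q ∂μ
            = (∫⁻ x in E, (‖h x‖₊ : ENNReal) ^ q ∂μ)
              + ∫⁻ x in Eᶜ, (‖h x‖₊ : ENNReal) ^ q ∂μ := by rw [hEc_eq]
          _ = ∫⁻ x, (‖h x‖₊ : ENNReal) ^ q ∂μ := hsplit_h
          _ ≤ ∫⁻ x, (‖f' x‖₊ : ENNReal) ^ q ∂μ := hJle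
          _ = (∫⁻ x in E, (‖f' x‖₊ : ENNReal) ^ q ∂μ)
              + ∫⁻ x in Eᶜ, (‖f' x‖₊ : ENNReal) ^ q ∂μ := hsplit_f'.symm
          _ = 0 + ∫⁻ x in Eᶜ, (‖f' x‖₊ : ENNReal) ^ q ∂μ := by rw [hEzero]
      exact le_antisymm
        ((ENNReal.add_le_add_iff_right hCfin).mp hkey) zero_le
    -- conclude `h = 0` a.e. on `E`
    have hhE0 : ∀ᵐ x ∂μ, x ∈ E → h x = 0 := by
      have hmeas : AEMeasurable (fun x => (‖h x‖₊ : ENNReal) ^ q) (μ.restrict E) :=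
        ((Lp.aestronglyMeasurable h).enorm.pow_const q).restrict
      have := (lintegral_eq_zero_iff' hmeas).mp hEh0
      rw [EventuallyEq, ae_restrict_iff' hE] at this
      filter_upwards [this] with x h1 hxE
      have h2 := h1 hxE
      simp only [Pi.zero_apply] at h2
      have h3 : (‖h x‖₊ : ENNReal) = 0 := by
        by_contra hcon
        exact hcon (by
          have := ENNReal.rpow_eq_zero_iff.mp h2
          rcases this with ⟨h4, _⟩ | ⟨h4, h5⟩
          · exact h4
          · exact absurd h4 (by simp))
      simpa using h3
    -- `h = f'` a.e., hence in `Lp`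
    apply Lp.ext
    filter_upwards [hhE0, hEc, hf'E] with x h1 h2 h3
    by_cases hxE : x ∈ E
    · rw [h1 hxE, h3 hxE]
    · exact h2 hxE
  -- identify the support of `f'` with `{f ≠ 0} \ E` and apply the lemma
  refine fixed_support_invariant hp T hpos f' hf'0 hfix' _ ?_
  filter_upwards [hf'E, hf'Ec] with x h1 h2
  constructor
  · rintro ⟨hfx, hxE⟩
    rw [h2 hxE]
    exact hfx
  · intro hf'x
    by_cases hxE : x ∈ E
    · exact absurd (h1 hxE) hf'x
    · rw [h2 hxE] at hf'x
      exact ⟨hf'x, hxE⟩
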